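/- Let u = (−1 + i√3)/2 ∈ ℂ, and let A₃ = [[1,0,0],[−2,1,0],[1,−1,1]], B₃ = [[1,u,u²],[0,1,2u],[0,0,1]] in SL(3,ℂ). Then for every t ∈ ℂ with t ≠ 0 and t ≠ 1, det(I − t⁻¹·A₃·B₃⁻¹·A₃⁻¹ + A₃·B₃⁻¹·A₃⁻¹·B₃ − t·B₃ + B₃·A₃·B₃⁻¹·A₃⁻¹) divided by det(t·B₃ − I) equals −(1/t³)·(t−1)·(t²−5t+1). That is, the twisted Alexander invariant Δ_{K,ρ₃}(t) = −(1/t³)(t−1)(t²−5t+1). -/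

import Mathlib

open Matrix

noncomputable def u41 : ℂ := (-1 + Complex.I * Real.sqrt 3) / 2

noncomputable def A3 : Matrix (Fin 3) (Fin 3) ℂ := !![1, 0, 0; -2, 1, 0; 1, -1, 1]

noncomputable def B3 : Matrix (Fin 3) (Fin 3) ℂ :=
  !![1, u41, u41 ^ 2; 0, 1, 2 * u41; 0, 0, 1]

lemma hu : u41 ^ 2 + u41 + 1 = 0 := by
  have hs : (Real.sqrt 3 : ℂ) ^ 2 = 3 := by
    rw [← Complex.ofReal_pow, Real.sq_sqrt (by norm_num : (3:ℝ) ≥ 0)]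
    norm_num
  unfold u41
  field_simp
  linear_combination Complex.I ^ 2 * hs + 3 * Complex.I_sq

lemma hAi : A3⁻¹ = !![1, 0, 0; 2, 1, 0; 1, 1, 1] := by
  apply inv_eq_right_inv
  simp only [A3, Matrix.mul_fin_three, Matrix.one_fin_three]
  norm_num

lemma hBi : B3⁻¹ = !![1, -u41, u41 ^ 2; 0, 1, -2 * u41; 0, 0, 1] := by
  apply inv_eq_right_inv
  simp only [B3, Matrix.mul_fin_three, Matrix.one_fin_three]
  congr 1 <;> ring_nf

set_option maxHeartbeats 1000000 in
theorem twisted_alexander_rho3 :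
    ∀ t : ℂ, t ≠ 0 → t ≠ 1 →
      det ((1 : Matrix (Fin 3) (Fin 3) ℂ) - t⁻¹ • (A3 * B3⁻¹ * A3⁻¹) +
          A3 * B3⁻¹ * A3⁻¹ * B3 - t • B3 + B3 * A3 * B3⁻¹ * A3⁻¹) /
        det (t • B3 - 1) =
      -(1 / t ^ 3) * (t - 1) * (t ^ 2 - 5 * t + 1) := by
  intro t ht ht1
  have h1 : t - 1 ≠ 0 := sub_ne_zero.mpr ht1
  have hden : det (t • B3 - 1) = (t - 1) ^ 3 := by
    rw [B3, Matrix.one_fin_three]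
    rw [Matrix.det_fin_three]
    simp [Matrix.smul_apply, smul_eq_mul]
    ring
  rw [hden, hAi, hBi, div_eq_iff (pow_ne_zero 3 h1)]
  simp only [A3, B3, Matrix.mul_fin_three, Matrix.one_fin_three]
  rw [Matrix.det_fin_three]
  simp only [Matrix.sub_apply, Matrix.add_apply, Matrix.smul_apply, smul_eq_mul,
    Matrix.cons_val', Matrix.cons_val_zero, Matrix.cons_val_one, Matrix.head_cons,
    Matrix.empty_val', Matrix.cons_val_fin_one, Matrix.head_fin_const, Matrix.of_apply,
    Matrix.cons_val_two, Matrix.tail_cons]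
  field_simp
  linear_combination ((t ^ 2 + t ^ 4) * (-3 + 3 * u41 - 4 * u41 ^ 2 + u41 ^ 3 - u41 ^ 5 + u41 ^ 6) +
    t ^ 3 * (7 - 7 * u41 + 12 * u41 ^ 2 - 5 * u41 ^ 3 + 8 * u41 ^ 4 - 3 * u41 ^ 5 + 3 * u41 ^ 6)) * hu
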